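/- Let L be a bounded complemented modular lattice that is atomic and in which every element is a join of atoms. Let s(x̄) and t(x̄) be lattice terms in variables x₁,…,xₙ (built from variables by binary meet and join) such that s(b̄) ≤ t(b̄) for every assignment b̄ in L. If s(b̄) < t(b̄) for some assignment b̄ in L, then there is an assignment c̄ in L with c_i ≤ b_i for all i and s(c̄) < t(c̄), such that, setting u := c₁ ⊔ … ⊔ cₙ, the interval [⊥, u] has height at most the number of occurrences of variables in t(x̄) (every chain in [⊥, u] has length at most that number). Auxiliary claim proved by structural induction: for every atom p of L, every lattice term t(x̄), and every assignment b̄ with p ≤ t(b̄), there is an assignment c̄ with c_i ≤ b_i, p ≤ t(c̄), and the height of [⊥, c₁ ⊔ … ⊔ cₙ] at most the number of occurrences of variables in t(x̄). -/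

import Mathlib

/-- Lattice terms in `n` variables, built from variables by binary meet and join. -/
inductive LatTerm (n : ℕ) : Type
  | var : Fin n → LatTerm n
  | meet : LatTerm n → LatTerm n → LatTerm n
  | join : LatTerm n → LatTerm n → LatTerm n

/-- Evaluation of a lattice term under an assignment `b` of the variables. -/
def LatTerm.eval {L : Type*} [Lattice L] {n : ℕ} (b : Fin n → L) : LatTerm n → L
  | .var i => b i
  | .meet t1 t2 => t1.eval b ⊓ t2.eval b
  | .join t1 t2 => t1.eval b ⊔ t2.eval b

/-- Number of occurrences of variables in a lattice term. -/
def LatTerm.occ {n : ℕ} : LatTerm n → ℕ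
  | .var _ => 1
  | .meet t1 t2 => t1.occ + t2.occ
  | .join t1 t2 => t1.occ + t2.occ

/-- The interval `[⊥, u]` has height at most `N`: every chain
`⊥ = y₀ < y₁ < … < y_k ≤ u` has length `k ≤ N`. -/
def HeightLE {L : Type*} [Lattice L] [BoundedOrder L] (u : L) (N : ℕ) : Prop :=
  ∀ (k : ℕ) (y : Fin (k + 1) → L), y 0 = ⊥ → StrictMono y → (∀ i, y i ≤ u) → k ≤ N

section Aux

variable {L : Type*} [Lattice L] [BoundedOrder L]

/-- ℕ-indexed version of `HeightLE`, easier to manipulate. -/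
def NHeightLE (u : L) (N : ℕ) : Prop :=
  ∀ (k : ℕ) (y : ℕ → L), y 0 = ⊥ → (∀ i < k, y i < y (i + 1)) → (∀ i ≤ k, y i ≤ u) → k ≤ N

lemma NHeightLE.heightLE {u : L} {N : ℕ} (h : NHeightLE u N) : HeightLE u N := by
  intro k y h0 hmono hle
  refine h k (fun i => y ⟨min i k, by omega⟩) ?_ ?_ ?_
  · convert h0 using 2
    apply Fin.ext
    simp
  · intro i hi
    apply hmono
    simp only [Fin.lt_def]
    omega
  · intro i _
    apply hle

lemma NHeightLE.anti {u v : L} {N : ℕ} (h : NHeightLE u N) (hvu : v ≤ u) : NHeightLE v N :=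
  fun k y h0 hs hl => h k y h0 hs fun i hi => (hl i hi).trans hvu

lemma NHeightLE.mono {u : L} {N M : ℕ} (h : NHeightLE u N) (hNM : N ≤ M) : NHeightLE u M :=
  fun k y h0 hs hl => (h k y h0 hs hl).trans hNM

lemma nheightLE_bot : NHeightLE (⊥ : L) 0 := by
  intro k y h0 hs hl
  by_contra hk
  have h1 := hs 0 (by omega)
  have h2 := hl 1 (by omega)
  rw [h0] at h1
  exact absurd (h2.trans bot_le) (not_le_of_gt h1)

variable [IsModularLattice L]

lemma modular_inj {x y u : L} (hxy : x ≤ y) (hinf : x ⊓ u = y ⊓ u) (hsup : x ⊔ u = y ⊔ u) :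
    x = y := by
  have h : (x ⊔ u) ⊓ y = x ⊔ u ⊓ y := sup_inf_assoc_of_le u hxy
  rw [hsup, inf_eq_right.mpr le_sup_left, inf_comm u y, ← hinf] at h
  rw [h]
  exact (sup_eq_left.mpr inf_le_left).symm

lemma atom_step {u a z : L} (ha : IsAtom a) (hz1 : u ≤ z) (hz2 : z ≤ u ⊔ a) :
    z = u ∨ z = u ⊔ a := by
  have h : (u ⊔ a) ⊓ z = u ⊔ a ⊓ z := sup_inf_assoc_of_le a hz1
  rw [inf_eq_right.mpr hz2] at h
  rcases ha.le_iff.mp (inf_le_left : a ⊓ z ≤ a) with h' | h'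
  · left; rw [h, h', sup_bot_eq]
  · right; rw [h, h']

lemma NHeightLE.sup_atom {u a : L} {N : ℕ} (h : NHeightLE u N) (ha : IsAtom a) :
    NHeightLE (a ⊔ u) (N + 1) := by
  intro k y h0 hstep hle
  by_cases hall : ∀ i ≤ k, y i ≤ u
  · exact (h k y h0 hstep hall).trans (Nat.le_succ N)
  push_neg at hall
  classical
  obtain ⟨i0, hi0k, hi0⟩ := hall
  have hex : ∃ i, ¬ y i ≤ u := ⟨i0, hi0⟩
  set m := Nat.find hex with hm
  have hmnot : ¬ y m ≤ u := Nat.find_spec hex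
  have hlt_le : ∀ i < m, y i ≤ u := fun i hi => not_not.mp (Nat.find_min hex hi)
  have hm1 : 1 ≤ m := by
    rcases Nat.eq_zero_or_pos m with h' | h'
    · exfalso; apply hmnot; rw [h', h0]; exact bot_le
    · exact h'
  have hmk : m ≤ k := (Nat.find_min' hex hi0).trans hi0k
  have hmono : ∀ i j, i ≤ j → j ≤ k → y i ≤ y j := by
    intro i j hij hjk
    induction j with
    | zero => have : i = 0 := Nat.le_zero.mp hij; rw [this]
    | succ j ih =>
      rcases Nat.lt_or_ge i (j + 1) with h' | h'
      · exact le_trans (ih (by omega) (by omega)) (le_of_lt (hstep j (by omega)))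
      · have : i = j + 1 := by omega
        rw [this]
  have hup : ∀ i, m ≤ i → i ≤ k → y i ⊔ u = a ⊔ u := by
    intro i hmi hik
    have h1 : ¬ y i ≤ u := fun hc => hmnot ((hmono m i hmi hik).trans hc)
    have h3 : y i ⊔ u ≤ u ⊔ a := sup_le ((hle i hik).trans (sup_comm a u).le) le_sup_left
    rcases atom_step ha (le_sup_right : u ≤ y i ⊔ u) h3 with h' | h'
    · exact absurd (le_sup_left.trans h'.le) h1
    · rw [h', sup_comm]
  set w : ℕ → L := fun i => if i < m then y i else y (i + 1) ⊓ u with hw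
  have hk1 : k - 1 ≤ N := by
    apply h (k - 1) w
    · show (if 0 < m then y 0 else _) = ⊥
      rw [if_pos (by omega), h0]
    · intro i hi
      by_cases h1 : i + 1 < m
      · have h2 : i < m := by omega
        show (if i < m then _ else _) < (if i + 1 < m then _ else _)
        rw [if_pos h2, if_pos h1]
        exact hstep i (by omega)
      · by_cases h2 : i < m
        · have him : i + 1 = m := by omega
          show (if i < m then _ else _) < (if i + 1 < m then _ else _)
          rw [if_pos h2, if_neg h1]
          have hle1 : y i ≤ y (i + 2) ⊓ u :=
            le_inf (hmono i (i + 2) (by omega) (by omega)) (hlt_le i h2)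
          refine lt_of_le_of_ne hle1 fun heq => ?_
          have e1 : y (i + 1) ⊓ u = y (i + 2) ⊓ u := by
            refine le_antisymm (inf_le_inf_right u (le_of_lt (hstep (i + 1) (by omega)))) ?_
            rw [← heq]
            exact le_inf (hmono i (i + 1) (by omega) (by omega)) (hlt_le i h2)
          have e2 : y (i + 1) ⊔ u = y (i + 2) ⊔ u := by
            rw [hup (i + 1) (by omega) (by omega), hup (i + 2) (by omega) (by omega)]
          exact absurd (modular_inj (le_of_lt (hstep (i + 1) (by omega))) e1 e2)
            (ne_of_lt (hstep (i + 1) (by omega)))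
        · show (if i < m then _ else _) < (if i + 1 < m then _ else _)
          rw [if_neg h2, if_neg h1]
          have hle1 : y (i + 1) ⊓ u ≤ y (i + 2) ⊓ u :=
            inf_le_inf_right u (le_of_lt (hstep (i + 1) (by omega)))
          refine lt_of_le_of_ne hle1 fun heq => ?_
          have e2 : y (i + 1) ⊔ u = y (i + 2) ⊔ u := by
            rw [hup (i + 1) (by omega) (by omega), hup (i + 2) (by omega) (by omega)]
          exact absurd (modular_inj (le_of_lt (hstep (i + 1) (by omega))) heq e2)
            (ne_of_lt (hstep (i + 1) (by omega)))
    · intro i hik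
      by_cases h1 : i < m
      · show (if i < m then _ else _) ≤ u
        rw [if_pos h1]; exact hlt_le i h1
      · show (if i < m then _ else _) ≤ u
        rw [if_neg h1]; exact inf_le_right
  omega

lemma nheightLE_foldr : ∀ l : List L, (∀ a ∈ l, IsAtom a) →
    NHeightLE (l.foldr (· ⊔ ·) ⊥) l.length := by
  intro l
  induction l with
  | nil => intro _; exact nheightLE_bot
  | cons a tl ih =>
    intro hmem
    exact (ih fun x hx => hmem x (List.mem_cons_of_mem a hx)).sup_atom
      (hmem a List.mem_cons_self)

lemma foldr_sup_append (l1 l2 : List L) :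
    (l1 ++ l2).foldr (· ⊔ ·) ⊥ = l1.foldr (· ⊔ ·) ⊥ ⊔ l2.foldr (· ⊔ ·) ⊥ := by
  induction l1 with
  | nil => simp
  | cons a tl ih => simp [ih, sup_assoc]

variable [ComplementedLattice L] [IsAtomic L]

lemma proj_atom {p a b : L} (hp : IsAtom p) (h : p ≤ a ⊔ b) (hpb : ¬ p ≤ b) :
    ∃ q : L, IsAtom q ∧ q ≤ a ∧ p ≤ q ⊔ b := by
  set r := (p ⊔ b) ⊓ a with hr
  have hrb : r ⊔ b = (p ⊔ b) ⊓ (a ⊔ b) := inf_sup_assoc_of_le a le_sup_right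
  have hprb : p ≤ r ⊔ b := by rw [hrb]; exact le_inf le_sup_left h
  obtain ⟨x, hx⟩ := exists_isCompl (⟨r ⊓ b, inf_le_left⟩ : Set.Iic r)
  have hxr : (x : L) ≤ r := x.2
  have hxib : (x : L) ⊓ (r ⊓ b) = ⊥ := by
    have h1 : x ⊓ (⟨r ⊓ b, inf_le_left⟩ : Set.Iic r) = ⊥ := hx.symm.inf_eq_bot
    have := congrArg (Subtype.val) h1
    rwa [Set.Iic.coe_inf, Set.Iic.coe_bot] at this
  have hxb : (x : L) ⊓ b = ⊥ := by
    rw [← inf_eq_left.mpr hxr, inf_assoc]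
    exact hxib
  have hxsup : (x : L) ⊔ (r ⊓ b) = r := by
    have h1 : x ⊔ (⟨r ⊓ b, inf_le_left⟩ : Set.Iic r) = ⊤ := hx.symm.sup_eq_top
    have := congrArg (Subtype.val) h1
    rwa [Set.Iic.coe_sup, Set.Iic.coe_top] at this
  have hxne : (x : L) ≠ ⊥ := by
    intro h0
    rw [h0, bot_sup_eq] at hxsup
    have hrble : r ≤ b := hxsup ▸ inf_le_right
    exact hpb (hprb.trans (sup_le hrble le_rfl))
  obtain ⟨q, hq, hqx⟩ := (IsAtomic.eq_bot_or_exists_atom_le (x : L)).resolve_left hxne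
  have hqb : ¬ q ≤ b := by
    intro hle
    exact hq.1 (le_bot_iff.mp (hxb ▸ le_inf hqx hle))
  have hq_le_pb : q ≤ p ⊔ b := hqx.trans (hxr.trans inf_le_left)
  rcases atom_step hp (le_sup_right : b ≤ q ⊔ b)
      (sup_le (hq_le_pb.trans (by rw [sup_comm])) le_sup_left) with h1 | h1
  · exact absurd (le_sup_left.trans h1.le) hqb
  · exact ⟨q, hq, hqx.trans (hxr.trans inf_le_right),
      by rw [h1]; exact le_sup_right⟩

end Aux

theorem stmt_17 {L : Type*} [Lattice L] [BoundedOrder L] [IsModularLattice L]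
    [ComplementedLattice L] [IsAtomic L]
    (hatomistic : ∀ a : L, IsLUB {p : L | IsAtom p ∧ p ≤ a} a)
    (n : ℕ) :
    -- main claim
    (∀ s t : LatTerm n, (∀ b : Fin n → L, s.eval b ≤ t.eval b) →
      ∀ b : Fin n → L, s.eval b < t.eval b →
        ∃ c : Fin n → L, (∀ i, c i ≤ b i) ∧ s.eval c < t.eval c ∧
          HeightLE (Finset.univ.sup c) t.occ) ∧
    -- auxiliary claim
    (∀ p : L, IsAtom p → ∀ (t : LatTerm n) (b : Fin n → L), p ≤ t.eval b →
      ∃ c : Fin n → L, (∀ i, c i ≤ b i) ∧ p ≤ t.eval c ∧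
        HeightLE (Finset.univ.sup c) t.occ) := by
  classical
  have hevmono : ∀ (t : LatTerm n) (b c : Fin n → L), (∀ i, b i ≤ c i) →
      t.eval b ≤ t.eval c := by
    intro t
    induction t with
    | var i => intro b c h; exact h i
    | meet t1 t2 ih1 ih2 => intro b c h; exact inf_le_inf (ih1 b c h) (ih2 b c h)
    | join t1 t2 ih1 ih2 => intro b c h; exact sup_le_sup (ih1 b c h) (ih2 b c h)
  have aux : ∀ (t : LatTerm n) (p : L), IsAtom p → ∀ b : Fin n → L, p ≤ t.eval b →
      ∃ c : Fin n → L, (∀ i, c i ≤ b i) ∧ p ≤ t.eval c ∧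
        ∃ l : List L, (∀ q ∈ l, IsAtom q) ∧ l.length ≤ t.occ ∧
          Finset.univ.sup c ≤ l.foldr (· ⊔ ·) ⊥ := by
    intro t
    induction t with
    | var i =>
      intro p hp b hpb
      refine ⟨fun j => if j = i then p else ⊥, ?_, ?_, [p], ?_, ?_, ?_⟩
      · intro j
        by_cases h : j = i
        · subst h; simpa [LatTerm.eval] using hpb
        · simp [h]
      · show p ≤ (if i = i then p else ⊥)
        simp
      · intro q hq
        simp at hq
        subst hq; exact hp
      · simp [LatTerm.occ]
      · refine Finset.sup_le fun j _ => ?_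
        by_cases h : j = i <;> simp [h]
    | meet t1 t2 ih1 ih2 =>
      intro p hp b hpb
      obtain ⟨c1, hc1, hp1, l1, hl1, hlen1, hsup1⟩ :=
        ih1 p hp b (hpb.trans inf_le_left)
      obtain ⟨c2, hc2, hp2, l2, hl2, hlen2, hsup2⟩ :=
        ih2 p hp b (hpb.trans inf_le_right)
      refine ⟨fun i => c1 i ⊔ c2 i, fun i => sup_le (hc1 i) (hc2 i), ?_, l1 ++ l2, ?_, ?_, ?_⟩
      · exact le_inf (hp1.trans (hevmono t1 c1 _ fun i => le_sup_left))
          (hp2.trans (hevmono t2 c2 _ fun i => le_sup_right))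
      · intro q hq
        rcases List.mem_append.mp hq with h | h
        · exact hl1 q h
        · exact hl2 q h
      · simp only [List.length_append, LatTerm.occ]; omega
      · rw [foldr_sup_append]
        refine Finset.sup_le fun i _ => sup_le ?_ ?_
        · exact ((Finset.le_sup (Finset.mem_univ i)).trans hsup1).trans le_sup_left
        · exact ((Finset.le_sup (Finset.mem_univ i)).trans hsup2).trans le_sup_right
    | join t1 t2 ih1 ih2 =>
      intro p hp b hpb
      by_cases h1 : p ≤ t1.eval b
      · obtain ⟨c1, hc1, hp1, l1, hl1, hlen1, hsup1⟩ := ih1 p hp b h1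
        exact ⟨c1, hc1, hp1.trans le_sup_left, l1, hl1,
          hlen1.trans (by simp only [LatTerm.occ]; omega), hsup1⟩
      by_cases h2 : p ≤ t2.eval b
      · obtain ⟨c2, hc2, hp2, l2, hl2, hlen2, hsup2⟩ := ih2 p hp b h2
        exact ⟨c2, hc2, hp2.trans le_sup_right, l2, hl2,
          hlen2.trans (by simp only [LatTerm.occ]; omega), hsup2⟩
      · obtain ⟨q, hq, hqa, hpq⟩ := proj_atom hp hpb h2
        have hpq' : ¬ p ≤ q := by
          intro hle
          rcases hq.le_iff.mp hle with h' | h'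
          · exact hp.1 h'
          · exact h1 (h' ▸ hqa)
        obtain ⟨r, hr, hrb2, hpr⟩ := proj_atom hp (by rwa [sup_comm] at hpq) hpq'
        obtain ⟨c1, hc1, hp1, l1, hl1, hlen1, hsup1⟩ := ih1 q hq b hqa
        obtain ⟨c2, hc2, hp2, l2, hl2, hlen2, hsup2⟩ := ih2 r hr b hrb2
        refine ⟨fun i => c1 i ⊔ c2 i, fun i => sup_le (hc1 i) (hc2 i), ?_, l1 ++ l2, ?_, ?_, ?_⟩
        · have hq' : q ≤ t1.eval fun i => c1 i ⊔ c2 i :=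
            hp1.trans (hevmono t1 c1 _ fun i => le_sup_left)
          have hr' : r ≤ t2.eval fun i => c1 i ⊔ c2 i :=
            hp2.trans (hevmono t2 c2 _ fun i => le_sup_right)
          exact hpr.trans (sup_le (hr'.trans le_sup_right) (hq'.trans le_sup_left))
        · intro x hx
          rcases List.mem_append.mp hx with h | h
          · exact hl1 x h
          · exact hl2 x h
        · simp only [List.length_append, LatTerm.occ]; omega
        · rw [foldr_sup_append]
          refine Finset.sup_le fun i _ => sup_le ?_ ?_
          · exact ((Finset.le_sup (Finset.mem_univ i)).trans hsup1).trans le_sup_left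
          · exact ((Finset.le_sup (Finset.mem_univ i)).trans hsup2).trans le_sup_right
  have auxH : ∀ p : L, IsAtom p → ∀ (t : LatTerm n) (b : Fin n → L), p ≤ t.eval b →
      ∃ c : Fin n → L, (∀ i, c i ≤ b i) ∧ p ≤ t.eval c ∧
        HeightLE (Finset.univ.sup c) t.occ := by
    intro p hp t b hpb
    obtain ⟨c, hc, hpc, l, hl, hlen, hsup⟩ := aux t p hp b hpb
    exact ⟨c, hc, hpc,
      (((nheightLE_foldr l hl).anti hsup).mono hlen).heightLE⟩
  refine ⟨?_, auxH⟩
  intro s t hle b hlt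
  have hnle : ¬ t.eval b ≤ s.eval b := fun h => absurd (le_antisymm hlt.le h) (ne_of_lt hlt)
  have : ∃ p : L, IsAtom p ∧ p ≤ t.eval b ∧ ¬ p ≤ s.eval b := by
    by_contra hcon
    push_neg at hcon
    exact hnle ((hatomistic (t.eval b)).2 fun p hp => hcon p hp.1 hp.2)
  obtain ⟨p, hp, hpt, hps⟩ := this
  obtain ⟨c, hc, hpc, hH⟩ := auxH p hp t b hpt
  refine ⟨c, hc, ?_, hH⟩
  refine lt_of_le_of_ne (hle c) fun heq => ?_
  exact hps ((hpc.trans heq.symm.le).trans (hevmono s c b hc))
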